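/- Let g ∈ ℝ² be a nonzero vector and H a symmetric positive definite 2×2 real matrix. Then there exists a unique 2×2 matrix M with det M > 0 such that gᵀM = (0, 1) and MᵀHM = diag(1, α) for some α > 0. -/

import Mathlib

/-- For a nonzero vector `g` and a symmetric positive definite `2 × 2` matrix `H`,
there exists a unique `2 × 2` matrix `M` with `det M > 0` such that `gᵀ M = (0, 1)`
and `Mᵀ H M = diag(1, α)` for some `α > 0`. -/
theorem exists_unique_local_frame_matrix
    (g : Fin 2 → ℝ) (hg : g ≠ 0)
    (H : Matrix (Fin 2) (Fin 2) ℝ) (hsymm : H.IsSymm) (hH : H.PosDef) :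
    ∃! M : Matrix (Fin 2) (Fin 2) ℝ,
      0 < M.det ∧ Matrix.vecMul g M = ![0, 1] ∧
        ∃ α : ℝ, 0 < α ∧ M.transpose * H * M = Matrix.diagonal ![1, α] := by
  have hb : H 1 0 = H 0 1 := hsymm.apply 0 1
  set a := H 0 0 with ha
  set b := H 0 1 with hbd
  set c := H 1 1 with hc
  set p := g 0 with hp
  set q := g 1 with hq
  have hH2 : H = !![a, b; b, c] := by
    rw [Matrix.eta_fin_two H, hb]
  have htr : ∀ (x y z w : ℝ), (Matrix.transpose !![x, y; z, w]) = !![x, z; y, w] := by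
    intro x y z w; ext i j; fin_cases i <;> fin_cases j <;> simp
  have hdiag : ∀ α : ℝ, Matrix.diagonal ![(1:ℝ), α] = !![1, 0; 0, α] := by
    intro α; ext i j; fin_cases i <;> fin_cases j <;> simp
  have key : ∀ x y : ℝ, ¬ (x = 0 ∧ y = 0) → 0 < a * x^2 + 2 * b * x * y + c * y^2 := by
    intro x y h
    have hv : ![x, y] ≠ 0 := fun hc => h ⟨congrFun hc 0, congrFun hc 1⟩
    have := hH.dotProduct_mulVec_pos hv
    simp [dotProduct, Matrix.mulVec, Fin.sum_univ_two, hb, ← ha, ← hbd, ← hc] at this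
    nlinarith [this]
  have hgpq : ¬ (q = 0 ∧ -p = 0) := by
    rintro ⟨h1, h2⟩
    apply hg
    funext i
    fin_cases i
    · simpa using (neg_eq_zero.mp h2)
    · simpa using h1
  set Q : ℝ := a * q^2 - 2*b*p*q + c*p^2 with hQdef
  have hQ : 0 < Q := by have := key q (-p) hgpq; nlinarith [this]
  have hQ0 : Q ≠ 0 := ne_of_gt hQ
  set k : ℝ := Real.sqrt Q with hkdef
  have hk : 0 < k := Real.sqrt_pos.2 hQ
  have hk0 : k ≠ 0 := ne_of_gt hk
  have hk2 : k^2 = Q := Real.sq_sqrt hQ.le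
  set N : ℝ := a*(p*c - q*b)^2 + 2*b*(p*c - q*b)*(q*a - p*b) + c*(q*a - p*b)^2 with hNdef
  clear_value Q k N
  have hN : 0 < N := by
    rw [hNdef]
    apply key
    rintro ⟨h1, h2⟩
    apply hQ0
    linear_combination hQdef + p*h1 + q*h2
  refine ⟨!![q/k, (p*c - q*b)/Q; -p/k, (q*a - p*b)/Q], ⟨?_, ?_, ?_⟩, ?_⟩
  · rw [Matrix.det_fin_two_of]
    have : q / k * ((q * a - p * b) / Q) - (p * c - q * b) / Q * (-p / k) = 1 / k := by
      field_simp
      linear_combination -hQdef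
    rw [this]; positivity
  · funext i
    fin_cases i <;>
      simp [Matrix.vecMul, dotProduct, Fin.sum_univ_two, ← hp, ← hq]
    · ring
    · field_simp
      linear_combination -hQdef
  · refine ⟨N / Q^2, by positivity, ?_⟩
    rw [hH2, htr, Matrix.mul_fin_two, Matrix.mul_fin_two, hdiag]
    ext i j
    fin_cases i <;> fin_cases j <;> simp
    · field_simp
      linear_combination -hk2 - hQdef
    · field_simp
      ring
    · field_simp
      ring
    · field_simp
      linear_combination -hNdef
  · rintro M' ⟨hd, hv, α', hα', hMH⟩
    set A := M' 0 0 with hA0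
    set x := M' 0 1 with hx0
    set B := M' 1 0 with hB0
    set y := M' 1 1 with hy0
    have hM'eta : M' = !![A, x; B, y] := Matrix.eta_fin_two M'
    rw [hM'eta] at hv hMH hd
    rw [Matrix.det_fin_two_of] at hd
    set t : ℝ := A*y - x*B with ht
    clear_value A x B y t
    have e0 : p*A + q*B = 0 := by
      have := congrFun hv 0
      simpa [Matrix.vecMul, dotProduct, Fin.sum_univ_two, ← hp, ← hq] using this
    have e1 : p*x + q*y = 1 := by
      have := congrFun hv 1
      simpa [Matrix.vecMul, dotProduct, Fin.sum_univ_two, ← hp, ← hq] using this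
    rw [hH2, htr, Matrix.mul_fin_two, Matrix.mul_fin_two, hdiag] at hMH
    have f00 : (A*a + B*b)*A + (A*b + B*c)*B = 1 := by
      have := congrFun (congrFun hMH 0) 0
      simpa using this
    have f01 : (A*a + B*b)*x + (A*b + B*c)*y = 0 := by
      have := congrFun (congrFun hMH 0) 1
      simpa using this
    have hA : A = q*t := by linear_combination (-q)*ht + x*e0 - A*e1
    have hB : B = -p*t := by linear_combination p*ht + y*e0 - B*e1
    rw [hA, hB] at f00 f01
    have hQt : t^2 * Q = 1 := by linear_combination f00 + t^2*hQdef
    have ht_pos : 0 < t := hd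
    have ht0 : t ≠ 0 := ne_of_gt ht_pos
    have h1 : (t*k)^2 = 1 := by rw [mul_pow, hk2]; exact hQt
    have htk : t*k = 1 := by
      rcases mul_eq_zero.mp (show (t*k - 1)*(t*k + 1) = 0 by linear_combination h1) with h | h
      · linarith
      · linarith [mul_pos ht_pos hk]
    have eq2 : (q*a - p*b)*x + (q*b - p*c)*y = 0 := by
      apply mul_left_cancel₀ ht0
      linear_combination f01
    have hx : x * Q = p*c - q*b := by
      linear_combination x*hQdef + (p*c - q*b)*e1 + q*eq2
    have hy : y * Q = q*a - p*b := by
      linear_combination y*hQdef - p*eq2 + (q*a - p*b)*e1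
    rw [hM'eta]
    ext i j
    fin_cases i <;> fin_cases j <;> simp
    · rw [hA]; field_simp; linear_combination q*htk
    · field_simp; linear_combination hx
    · rw [hB]; field_simp; linear_combination -p*htk
    · field_simp; linear_combination hy
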